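/- Any two distinct columns of the sparse Kerdock matrix S^m either are orthogonal or have exactly one row at which both are nonzero; in the latter case the absolute value of their inner product is 2^{-m}, and in all cases the absolute inner product of two distinct columns is either 0 or 2^{-m}. -/

import Mathlib

/-- Binary vectors of length `m`. -/
abbrev BV (m : ℕ) := Fin m → ZMod 2

/-- Row indices of the sparse Kerdock matrix: pairs `(u1, u2)`. -/
abbrev KRow (m : ℕ) := BV m × BV m

/-- Column indices of the sparse Kerdock matrix: triples `(a1, a2, b)`. -/
abbrev KCol (m : ℕ) := BV m × BV m × BV m

/-- `P` is a Kerdock set: a family of symmetric binary matrices such that the sum of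
any two distinct members is invertible. -/
def IsKerdockSet {m : ℕ} (P : BV m → Matrix (Fin m) (Fin m) (ZMod 2)) : Prop :=
  (∀ b, (P b).IsSymm) ∧ ∀ b b', b ≠ b' → IsUnit (P b + P b')

/-- Entry of the sparse Kerdock matrix `S^m` at row `(u1, u2)` and column `(a1, a2, b)`:
`2^{-m/2} * (-1)^{⟨u1, a1⟩}` if `u1 (P b) + u2 = a2`, and `0` otherwise. -/
noncomputable def kerdockEntry (m : ℕ) (P : BV m → Matrix (Fin m) (Fin m) (ZMod 2))
    (u : KRow m) (c : KCol m) : ℝ :=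
  if Matrix.vecMul u.1 (P c.2.2) + u.2 = c.2.1 then
    (Real.sqrt (2 ^ m))⁻¹ * (-1 : ℝ) ^ ((∑ i, u.1 i * c.1 i).val)
  else 0

lemma zmod2_pow_add (x y : ZMod 2) :
    ((-1:ℝ)) ^ (x + y).val = (-1:ℝ)^x.val * (-1:ℝ)^y.val := by
  obtain rfl | rfl : x = 0 ∨ x = 1 := by revert x; decide
  all_goals obtain rfl | rfl : y = 0 ∨ y = 1 := by revert y; decide
  all_goals
    norm_num [show ((0:ZMod 2)).val = 0 from rfl, show ((1:ZMod 2)).val = 1 from rfl,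
      show ((2:ZMod 2)).val = 0 from rfl, show ((1:ZMod 2)+1 = 0) from rfl]

lemma zmod2_pow_flip (x : ZMod 2) : ((-1:ℝ))^((x+1).val) = -((-1:ℝ)^x.val) := by
  obtain rfl | rfl : x = 0 ∨ x = 1 := by revert x; decide
  all_goals
    norm_num [show ((0:ZMod 2)).val = 0 from rfl, show ((1:ZMod 2)).val = 1 from rfl,
      show ((2:ZMod 2)).val = 0 from rfl, show ((1:ZMod 2)+1 = 0) from rfl]

lemma charSum {m : ℕ} (d : BV m) (hd : d ≠ 0) :
    ∑ u : BV m, ((-1:ℝ) ^ (∑ i, u i * d i).val) = 0 := by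
  obtain ⟨i, hi⟩ : ∃ i, d i ≠ 0 := by
    by_contra h; push_neg at h; exact hd (funext h)
  have hdi : d i = 1 := by
    have : ∀ x : ZMod 2, x ≠ 0 → x = 1 := by decide
    exact this _ hi
  set e : BV m := Pi.single i 1 with he
  set f : BV m → ℝ := fun u => (-1:ℝ)^((∑ j, u j * d j).val) with hf
  have key : ∀ u, f (u + e) = - f u := by
    intro u
    have hsum : (∑ j, (u + e) j * d j) = (∑ j, u j * d j) + 1 := by
      have : ∀ j, (u + e) j * d j = u j * d j + e j * d j := by
        intro j; simp [add_mul]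
      rw [Finset.sum_congr rfl (fun j _ => this j), Finset.sum_add_distrib]
      congr 1
      simp [he, Pi.single_apply, hdi]
    simp only [hf, hsum, zmod2_pow_flip]
  have h1 : ∑ u : BV m, f (u + e) = ∑ u : BV m, f u :=
    Fintype.sum_equiv (Equiv.addRight e) _ _ (fun u => rfl)
  have h2 : ∑ u : BV m, f (u + e) = - ∑ u : BV m, f u := by simp [key]
  have := h1.symm.trans h2
  linarith

lemma kerdockEntry_apply (m : ℕ) (P : BV m → Matrix (Fin m) (Fin m) (ZMod 2))
    (u1 u2 a1 a2 b : BV m) :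
    kerdockEntry m P (u1, u2) (a1, a2, b) =
      if Matrix.vecMul u1 (P b) + u2 = a2 then
        (Real.sqrt (2 ^ m))⁻¹ * (-1 : ℝ) ^ ((∑ i, u1 i * a1 i).val)
      else 0 := rfl

lemma sqrt_inv_ne (m : ℕ) : (Real.sqrt (2 ^ m))⁻¹ ≠ 0 := by positivity

lemma kerdock_ne_zero_iff (m : ℕ) (P : BV m → Matrix (Fin m) (Fin m) (ZMod 2))
    (u : KRow m) (c : KCol m) :
    kerdockEntry m P u c ≠ 0 ↔ Matrix.vecMul u.1 (P c.2.2) + u.2 = c.2.1 := by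
  unfold kerdockEntry
  split_ifs with h
  · simp only [h, iff_true]
    exact mul_ne_zero (sqrt_inv_ne m) (pow_ne_zero _ (by norm_num))
  · simp [h]

/-- Any two distinct columns of `S^m` either are orthogonal or have exactly one common
support row, in which case the absolute inner product is `2^{-m}`; in all cases the
absolute inner product is `0` or `2^{-m}`. -/
theorem sparse_kerdock_two_columns (m : ℕ) (hm : 1 ≤ m)
    (P : BV m → Matrix (Fin m) (Fin m) (ZMod 2)) (hP : IsKerdockSet P)
    (c1 c2 : KCol m) (hc : c1 ≠ c2) :
    ((∑ u : KRow m, kerdockEntry m P u c1 * kerdockEntry m P u c2 = 0) ∨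
      (Nat.card {u : KRow m // kerdockEntry m P u c1 ≠ 0 ∧ kerdockEntry m P u c2 ≠ 0} = 1 ∧
        |∑ u : KRow m, kerdockEntry m P u c1 * kerdockEntry m P u c2| = ((2 : ℝ) ^ m)⁻¹)) ∧
    (|∑ u : KRow m, kerdockEntry m P u c1 * kerdockEntry m P u c2| = 0 ∨
      |∑ u : KRow m, kerdockEntry m P u c1 * kerdockEntry m P u c2| = ((2 : ℝ) ^ m)⁻¹) := by
  obtain ⟨a1, a2, b1⟩ := c1
  obtain ⟨a1', a2', b2⟩ := c2
  set s : ℝ := (Real.sqrt (2 ^ m))⁻¹ with hs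
  have hs2 : s * s = ((2:ℝ)^m)⁻¹ := by
    rw [hs, ← mul_inv]
    congr 1
    exact Real.mul_self_sqrt (by positivity)
  have pt_sub : ∀ x y : BV m, x - y = x + y := by
    intro x y; funext j
    have : ∀ a b : ZMod 2, a - b = a + b := by decide
    simpa using this (x j) (y j)
  by_cases hb : b1 = b2
  · subst hb
    by_cases ha2 : a2 = a2'
    · subst ha2
      have ha1 : a1 ≠ a1' := by
        intro h; exact hc (by simp [h])
      have hd : a1 + a1' ≠ 0 := by
        intro h
        apply ha1
        funext j
        have : ∀ a b : ZMod 2, a + b = 0 → a = b := by decide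
        exact this _ _ (congrFun h j)
      have hsum : ∑ u : KRow m, kerdockEntry m P u (a1, a2, b1) *
          kerdockEntry m P u (a1', a2, b1) = 0 := by
        rw [Fintype.sum_prod_type]
        have inner : ∀ u1 : BV m,
            ∑ u2 : BV m, kerdockEntry m P (u1, u2) (a1, a2, b1) *
              kerdockEntry m P (u1, u2) (a1', a2, b1)
            = s * s * (-1:ℝ)^((∑ i, u1 i * (a1 + a1') i).val) := by
          intro u1
          have step : ∀ u2 : BV m,
              kerdockEntry m P (u1, u2) (a1, a2, b1) * kerdockEntry m P (u1, u2) (a1', a2, b1)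
              = if u2 = a2 - Matrix.vecMul u1 (P b1) then
                  s * s * (-1:ℝ)^((∑ i, u1 i * (a1 + a1') i).val) else 0 := by
            intro u2
            rw [kerdockEntry_apply, kerdockEntry_apply]
            have hcnd : (Matrix.vecMul u1 (P b1) + u2 = a2) ↔
                u2 = a2 - Matrix.vecMul u1 (P b1) := by
              constructor
              · intro h; rw [← h]; rw [pt_sub]; funext j
                have : ∀ a b : ZMod 2, b = (a + b) + a := by decide
                simpa using this (Matrix.vecMul u1 (P b1) j) (u2 j)
              · intro h; rw [h, pt_sub]; funext j
                have : ∀ a b : ZMod 2, a + (b + a) = b := by decide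
                simpa using this (Matrix.vecMul u1 (P b1) j) (a2 j)
            split_ifs with h1 h2 h2
            · have harg : (∑ i, u1 i * (a1 + a1') i)
                  = (∑ i, u1 i * a1 i) + (∑ i, u1 i * a1' i) := by
                rw [← Finset.sum_add_distrib]
                exact Finset.sum_congr rfl fun j _ => by simp [mul_add]
              rw [harg, zmod2_pow_add]
              ring
            · exact absurd (hcnd.mp h1) h2
            · exact absurd (hcnd.mpr h2) h1
            · ring
          rw [Finset.sum_congr rfl fun u2 _ => step u2]
          rw [Finset.sum_ite_eq' Finset.univ (a2 - Matrix.vecMul u1 (P b1))]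
          simp
        rw [Finset.sum_congr rfl fun u1 _ => inner u1, ← Finset.mul_sum,
          charSum _ hd, mul_zero]
      rw [hsum]
      exact ⟨Or.inl rfl, Or.inl (abs_zero)⟩
    · -- b equal, a2 ≠ a2' : disjoint supports
      have hsum : ∑ u : KRow m, kerdockEntry m P u (a1, a2, b1) *
          kerdockEntry m P u (a1', a2', b1) = 0 := by
        apply Finset.sum_eq_zero
        intro u _
        obtain ⟨u1, u2⟩ := u
        rw [kerdockEntry_apply, kerdockEntry_apply]
        split_ifs with h1 h2
        · exact absurd (h1.symm.trans h2) ha2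
        all_goals ring
      rw [hsum]
      exact ⟨Or.inl rfl, Or.inl (abs_zero)⟩
  · -- b1 ≠ b2 : unique common support row
    have hM := hP.2 b1 b2 hb
    set M : Matrix (Fin m) (Fin m) (ZMod 2) := P b1 + P b2 with hMdef
    have hdet : IsUnit M.det := (Matrix.isUnit_iff_isUnit_det M).mp hM
    have hMN : M * M⁻¹ = 1 := Matrix.mul_nonsing_inv M hdet
    have hNM : M⁻¹ * M = 1 := Matrix.nonsing_inv_mul M hdet
    set t1 : BV m := Matrix.vecMul (a2 + a2') M⁻¹ with ht1
    have ht1M : Matrix.vecMul t1 M = a2 + a2' := by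
      rw [ht1, Matrix.vecMul_vecMul, hNM, Matrix.vecMul_one]
    set t2 : BV m := a2 - Matrix.vecMul t1 (P b1) with ht2
    have hvM : ∀ u1 : BV m, Matrix.vecMul u1 M =
        Matrix.vecMul u1 (P b1) + Matrix.vecMul u1 (P b2) := by
      intro u1; rw [hMdef, Matrix.vecMul_add]
    have huniq : ∀ u : KRow m,
        ((Matrix.vecMul u.1 (P b1) + u.2 = a2) ∧ (Matrix.vecMul u.1 (P b2) + u.2 = a2'))
        ↔ u = (t1, t2) := by
      rintro ⟨u1, u2⟩
      constructor
      · rintro ⟨h1, h2⟩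
        have h3 : Matrix.vecMul u1 M = a2 + a2' := by
          rw [hvM]
          funext j
          have key : ∀ p q r x y : ZMod 2, p + r = x → q + r = y → p + q = x + y := by decide
          exact key _ _ _ _ _ (congrFun h1 j) (congrFun h2 j)
        have hu1 : u1 = t1 := by
          have := congrArg (fun v => Matrix.vecMul v M⁻¹) h3
          simpa [Matrix.vecMul_vecMul, hMN, Matrix.vecMul_one, ht1] using this
        have hu2 : u2 = t2 := by
          rw [ht2, ← hu1, ← h1, pt_sub]
          funext j
          have : ∀ a b : ZMod 2, b = (a + b) + a := by decide
          simpa using this (Matrix.vecMul u1 (P b1) j) (u2 j)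
        simp [hu1, hu2]
      · rintro h
        rw [h]
        have hsumv : Matrix.vecMul t1 (P b1) + Matrix.vecMul t1 (P b2) = a2 + a2' :=
          (hvM t1).symm.trans ht1M
        constructor
        · show Matrix.vecMul t1 (P b1) + t2 = a2
          rw [ht2, pt_sub]
          funext j
          have : ∀ a b : ZMod 2, a + (b + a) = b := by decide
          simpa using this (Matrix.vecMul t1 (P b1) j) (a2 j)
        · show Matrix.vecMul t1 (P b2) + t2 = a2'
          funext j
          have key : ∀ v1 v2 x y : ZMod 2, v1 + v2 = x + y → v2 + (x - v1) = y := by decide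
          have := key (Matrix.vecMul t1 (P b1) j) (Matrix.vecMul t1 (P b2) j)
            (a2 j) (a2' j) (congrFun hsumv j)
          simpa [ht2] using this
    have hcond1 : Matrix.vecMul t1 (P b1) + t2 = a2 := ((huniq (t1, t2)).mpr rfl).1
    have hcond2 : Matrix.vecMul t1 (P b2) + t2 = a2' := ((huniq (t1, t2)).mpr rfl).2
    have hsum_eq : ∑ u : KRow m, kerdockEntry m P u (a1, a2, b1) *
        kerdockEntry m P u (a1', a2', b2)
        = kerdockEntry m P (t1, t2) (a1, a2, b1) * kerdockEntry m P (t1, t2) (a1', a2', b2) := by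
      apply Finset.sum_eq_single
      · intro u _ hne
        by_cases h1 : Matrix.vecMul u.1 (P b1) + u.2 = a2
        · by_cases h2 : Matrix.vecMul u.1 (P b2) + u.2 = a2'
          · exact absurd ((huniq u).mp ⟨h1, h2⟩) hne
          · have hz : kerdockEntry m P u (a1', a2', b2) = 0 := by
              unfold kerdockEntry;simp [h2]
            rw [hz, mul_zero]
        · have hz : kerdockEntry m P u (a1, a2, b1) = 0 := by
            unfold kerdockEntry; simp [h1]
          rw [hz, zero_mul]
      · intro h; exact absurd (Finset.mem_univ _) h
    have habs : |∑ u : KRow m, kerdockEntry m P u (a1, a2, b1) *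
        kerdockEntry m P u (a1', a2', b2)| = ((2:ℝ)^m)⁻¹ := by
      rw [hsum_eq, kerdockEntry_apply, kerdockEntry_apply, if_pos hcond1, if_pos hcond2]
      have habs1 : ∀ k : ℕ, |(-1:ℝ)^k| = 1 := fun k => by
        rw [abs_pow, abs_neg, abs_one, one_pow]
      rw [abs_mul, abs_mul, abs_mul, habs1, habs1,
        abs_of_nonneg (by positivity : (0:ℝ) ≤ (Real.sqrt (2 ^ m))⁻¹)]
      simp only [mul_one]
      exact hs2
    have hcard : Nat.card {u : KRow m // kerdockEntry m P u (a1, a2, b1) ≠ 0 ∧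
        kerdockEntry m P u (a1', a2', b2) ≠ 0} = 1 := by
      rw [Nat.card_eq_one_iff_exists]
      refine ⟨⟨(t1, t2), ?_, ?_⟩, ?_⟩
      · rw [kerdock_ne_zero_iff]; exact hcond1
      · rw [kerdock_ne_zero_iff]; exact hcond2
      · rintro ⟨u, hu1, hu2⟩
        apply Subtype.ext
        exact (huniq u).mp ⟨(kerdock_ne_zero_iff _ _ _ _).mp hu1,
          (kerdock_ne_zero_iff _ _ _ _).mp hu2⟩
    exact ⟨Or.inr ⟨hcard, habs⟩, Or.inr habs⟩
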